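/- Let φ : ℝ^m → ℝ^n be smooth and let v, w : ℝ^m → ℝ^n be smooth with compact support. Define G(s,t) = ∫_{ℝ^m} ( ‖(φ + tv + sw)^*h‖²(x) − ‖φ^*h‖²(x) ) dx. Then the mixed second partial derivative of G at (s,t) = (0,0) exists and equals 4 ∫_{ℝ^m} ∑_{i,j=1}^m [ ( ⟨∂_i w, ∂_j φ⟩ + ⟨∂_i φ, ∂_j w⟩ ) ⟨∂_i v, ∂_j φ⟩ + ⟨∂_i φ, ∂_j φ⟩ ⟨∂_i v, ∂_j w⟩ ] dx. -/

import Mathlib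

open scoped BigOperators
open MeasureTheory

/-- Partial derivative `∂φ/∂x_i` of a map `φ : ℝ^m → ℝ^n`. -/
noncomputable def pd {m n : ℕ} (φ : (Fin m → ℝ) → Fin n → ℝ) (i : Fin m) (x : Fin m → ℝ) :
    Fin n → ℝ :=
  fderiv ℝ φ x (Pi.single i 1)

/-- Euclidean inner product on `ℝ^n`. -/
def inn {n : ℕ} (u v : Fin n → ℝ) : ℝ := ∑ k, u k * v k

noncomputable def SA {m n : ℕ} (f g f' g' : (Fin m → ℝ) → Fin n → ℝ) (x : Fin m → ℝ) : ℝ :=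
  ∑ i, ∑ j, inn (pd f i x) (pd g j x) * inn (pd f' i x) (pd g' j x)

lemma inn_comm {n : ℕ} (u v : Fin n → ℝ) : inn u v = inn v u := by
  simp [inn, mul_comm]

@[simp] lemma inn_zero_left {n : ℕ} (u : Fin n → ℝ) : inn 0 u = 0 := by simp [inn]
@[simp] lemma inn_zero_right {n : ℕ} (u : Fin n → ℝ) : inn u 0 = 0 := by simp [inn]

lemma inn_expand {n : ℕ} (s t : ℝ) (p q r p' q' r' : Fin n → ℝ) :
    inn (p + t • q + s • r) (p' + t • q' + s • r')
      = inn p p' + t * inn q p' + s * inn r p' + t * inn p q' + t ^ 2 * inn q q'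
        + s * t * inn r q' + s * inn p r' + s * t * inn q r' + s ^ 2 * inn r r' := by
  simp only [inn, Pi.add_apply, Pi.smul_apply, smul_eq_mul, Finset.mul_sum,
    ← Finset.sum_add_distrib]
  exact Finset.sum_congr rfl fun k _ => by ring

lemma pd_combo {m n : ℕ} {φ v w : (Fin m → ℝ) → Fin n → ℝ}
    (hφ : ContDiff ℝ (⊤ : ℕ∞) φ) (hv : ContDiff ℝ (⊤ : ℕ∞) v) (hw : ContDiff ℝ (⊤ : ℕ∞) w)
    (s t : ℝ) (i : Fin m) (x : Fin m → ℝ) :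
    pd (fun y => φ y + t • v y + s • w y) i x = pd φ i x + t • pd v i x + s • pd w i x := by
  have h1 : HasFDerivAt φ (fderiv ℝ φ x) x := (hφ.differentiable (by simp) x).hasFDerivAt
  have h2 : HasFDerivAt v (fderiv ℝ v x) x := (hv.differentiable (by simp) x).hasFDerivAt
  have h3 : HasFDerivAt w (fderiv ℝ w x) x := (hw.differentiable (by simp) x).hasFDerivAt
  have h : HasFDerivAt (fun y => φ y + t • v y + s • w y)
      (fderiv ℝ φ x + t • fderiv ℝ v x + s • fderiv ℝ w x) x :=
    (h1.add (h2.const_smul t)).add (h3.const_smul s)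
  simp only [pd, h.fderiv, ContinuousLinearMap.add_apply, ContinuousLinearMap.coe_smul',
    Pi.smul_apply]

lemma cont_pd {m n : ℕ} {f : (Fin m → ℝ) → Fin n → ℝ} (hf : ContDiff ℝ (⊤ : ℕ∞) f)
    (i : Fin m) : Continuous fun x => pd f i x := by
  simp only [pd]
  exact (hf.continuous_fderiv (by simp)).clm_apply continuous_const

lemma cont_inn_pd {m n : ℕ} {f g : (Fin m → ℝ) → Fin n → ℝ} (hf : ContDiff ℝ (⊤ : ℕ∞) f)
    (hg : ContDiff ℝ (⊤ : ℕ∞) g) (i j : Fin m) :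
    Continuous fun x => inn (pd f i x) (pd g j x) := by
  simp only [inn]
  exact continuous_finset_sum _ fun k _ =>
    ((continuous_apply k).comp (cont_pd hf i)).mul ((continuous_apply k).comp (cont_pd hg j))

lemma pd_eq_zero {m n : ℕ} {f : (Fin m → ℝ) → Fin n → ℝ} {x : Fin m → ℝ}
    (hx : x ∉ tsupport f) (i : Fin m) : pd f i x = 0 := by
  have h : fderiv ℝ f x = 0 := by
    by_contra h
    exact hx (support_fderiv_subset ℝ (by simpa [Function.mem_support] using h))
  simp [pd, h]

lemma SA_integrable {m n : ℕ} {f g f' g' : (Fin m → ℝ) → Fin n → ℝ}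
    (hf : ContDiff ℝ (⊤ : ℕ∞) f) (hg : ContDiff ℝ (⊤ : ℕ∞) g)
    (hf' : ContDiff ℝ (⊤ : ℕ∞) f') (hg' : ContDiff ℝ (⊤ : ℕ∞) g')
    (hs : HasCompactSupport f ∨ HasCompactSupport g ∨ HasCompactSupport f' ∨
      HasCompactSupport g') : Integrable (SA f g f' g') := by
  have hc : Continuous (SA f g f' g') := by
    apply continuous_finset_sum _ fun i _ => continuous_finset_sum _ fun j _ => ?_
    exact (cont_inn_pd hf hg i j).mul (cont_inn_pd hf' hg' i j)
  apply hc.integrable_of_hasCompactSupport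
  rcases hs with h | h | h | h <;>
    exact HasCompactSupport.intro h fun x hx => by simp [SA, pd_eq_zero hx]

lemma SA_swap {m n : ℕ} (f g f' g' : (Fin m → ℝ) → Fin n → ℝ) (x : Fin m → ℝ) :
    SA f g f' g' x = SA g f g' f' x := by
  rw [SA, SA, Finset.sum_comm]
  exact Finset.sum_congr rfl fun i _ => Finset.sum_congr rfl fun j _ => by
    rw [inn_comm (pd g i x) (pd f j x), inn_comm (pd g' i x) (pd f' j x)]

lemma SA_comm {m n : ℕ} (f g f' g' : (Fin m → ℝ) → Fin n → ℝ) (x : Fin m → ℝ) :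
    SA f g f' g' x = SA f' g' f g x := by
  simp [SA, mul_comm]

lemma hasDerivAt_quartic (c0 c1 c2 c3 c4 : ℝ) :
    HasDerivAt (fun t : ℝ => c0 + c1 * t + c2 * t ^ 2 + c3 * t ^ 3 + c4 * t ^ 4) c1 0 := by
  have h : HasDerivAt (fun t : ℝ => c0 + c1 * t + c2 * t ^ 2 + c3 * t ^ 3 + c4 * t ^ 4)
      (0 + c1 * 1 + c2 * ((2 : ℕ) * (0:ℝ) ^ 1) + c3 * ((3 : ℕ) * (0:ℝ) ^ 2)
        + c4 * ((4 : ℕ) * (0:ℝ) ^ 3)) 0 :=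
    ((((hasDerivAt_const 0 c0).add ((hasDerivAt_id 0).const_mul c1)).add
      ((hasDerivAt_pow 2 0).const_mul c2)).add ((hasDerivAt_pow 3 0).const_mul c3)).add
      ((hasDerivAt_pow 4 0).const_mul c4)
  simpa using h

noncomputable def K0 {m n : ℕ} (φ v w : (Fin m → ℝ) → Fin n → ℝ) : (Fin m → ℝ) → ℝ := fun x =>
  2 * SA φ φ v φ x + 2 * SA φ φ φ v x
noncomputable def K1 {m n : ℕ} (φ v w : (Fin m → ℝ) → Fin n → ℝ) : (Fin m → ℝ) → ℝ := fun x =>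
  2 * SA φ φ w φ x + 2 * SA φ φ φ w x
noncomputable def K2 {m n : ℕ} (φ v w : (Fin m → ℝ) → Fin n → ℝ) : (Fin m → ℝ) → ℝ := fun x =>
  2 * SA φ φ v v x + SA v φ v φ x + 2 * SA v φ φ v x + SA φ v φ v x
noncomputable def K3 {m n : ℕ} (φ v w : (Fin m → ℝ) → Fin n → ℝ) : (Fin m → ℝ) → ℝ := fun x =>
  2 * SA φ φ w w x + SA w φ w φ x + 2 * SA w φ φ w x + SA φ w φ w x
noncomputable def K4 {m n : ℕ} (φ v w : (Fin m → ℝ) → Fin n → ℝ) : (Fin m → ℝ) → ℝ := fun x =>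
  2 * SA φ φ w v x + 2 * SA φ φ v w x + 2 * SA v φ w φ x + 2 * SA v φ φ w x
    + 2 * SA φ v w φ x + 2 * SA φ v φ w x
noncomputable def K5 {m n : ℕ} (φ v w : (Fin m → ℝ) → Fin n → ℝ) : (Fin m → ℝ) → ℝ := fun x =>
  2 * SA v φ v v x + 2 * SA φ v v v x
noncomputable def K6 {m n : ℕ} (φ v w : (Fin m → ℝ) → Fin n → ℝ) : (Fin m → ℝ) → ℝ := fun x =>
  2 * SA v φ w w x + 2 * SA φ v w w x + 2 * SA w φ w v x + 2 * SA w φ v w x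
    + 2 * SA φ w w v x + 2 * SA φ w v w x
noncomputable def K7 {m n : ℕ} (φ v w : (Fin m → ℝ) → Fin n → ℝ) : (Fin m → ℝ) → ℝ := fun x =>
  2 * SA v φ w v x + 2 * SA v φ v w x + 2 * SA φ v w v x + 2 * SA φ v v w x
    + 2 * SA w φ v v x + 2 * SA φ w v v x
noncomputable def K8 {m n : ℕ} (φ v w : (Fin m → ℝ) → Fin n → ℝ) : (Fin m → ℝ) → ℝ := fun x =>
  2 * SA w φ w w x + 2 * SA φ w w w x
noncomputable def K9 {m n : ℕ} (φ v w : (Fin m → ℝ) → Fin n → ℝ) : (Fin m → ℝ) → ℝ := fun x => SA v v v v x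
noncomputable def K10 {m n : ℕ} (φ v w : (Fin m → ℝ) → Fin n → ℝ) : (Fin m → ℝ) → ℝ := fun x =>
  2 * SA v v w w x + SA w v w v x + 2 * SA w v v w x + SA v w v w x
noncomputable def K11 {m n : ℕ} (φ v w : (Fin m → ℝ) → Fin n → ℝ) : (Fin m → ℝ) → ℝ := fun x =>
  2 * SA v v w v x + 2 * SA v v v w x
noncomputable def K12 {m n : ℕ} (φ v w : (Fin m → ℝ) → Fin n → ℝ) : (Fin m → ℝ) → ℝ := fun x => SA w w w w x
noncomputable def K13 {m n : ℕ} (φ v w : (Fin m → ℝ) → Fin n → ℝ) : (Fin m → ℝ) → ℝ := fun x =>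
  2 * SA w w w v x + 2 * SA w w v w x

lemma hpt_expand {m n : ℕ} (φ v w : (Fin m → ℝ) → Fin n → ℝ)
    (hφ : ContDiff ℝ (⊤ : ℕ∞) φ) (hv : ContDiff ℝ (⊤ : ℕ∞) v) (hw : ContDiff ℝ (⊤ : ℕ∞) w)
    (s t : ℝ) (x : Fin m → ℝ) :
    ((∑ i, ∑ j,
        inn (pd (fun y => φ y + t • v y + s • w y) i x)
            (pd (fun y => φ y + t • v y + s • w y) j x) ^ 2)
      - ∑ i, ∑ j, inn (pd φ i x) (pd φ j x) ^ 2)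
    = t * K0 φ v w x + (s * K1 φ v w x + (t ^ 2 * K2 φ v w x + (s ^ 2 * K3 φ v w x
      + (s * t * K4 φ v w x + (t ^ 3 * K5 φ v w x + (s ^ 2 * t * K6 φ v w x
      + (s * t ^ 2 * K7 φ v w x + (s ^ 3 * K8 φ v w x + (t ^ 4 * K9 φ v w x
      + (s ^ 2 * t ^ 2 * K10 φ v w x + (s * t ^ 3 * K11 φ v w x
      + (s ^ 4 * K12 φ v w x + s ^ 3 * t * K13 φ v w x)))))))))))) := by
  have hpd : ∀ i : Fin m, pd (fun y => φ y + t • v y + s • w y) i x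
      = pd φ i x + t • pd v i x + s • pd w i x := fun i => pd_combo hφ hv hw s t i x
  simp only [hpd, inn_expand]
  simp only [K0, K1, K2, K3, K4, K5, K6, K7, K8, K9, K10, K11, K12, K13, SA,
    Finset.mul_sum, mul_add, ← Finset.sum_add_distrib, ← Finset.sum_sub_distrib]
  refine Finset.sum_congr rfl fun i _ => Finset.sum_congr rfl fun j _ => ?_
  ring

/-- Second variation of the symphonic energy along the two-parameter variation
`φ_{s,t} = φ + tv + sw`: the mixed second partial derivative of
`G(s,t) = ∫ (‖(φ+tv+sw)^*h‖² − ‖φ^*h‖²)` at `(0,0)` exists and equals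
`4 ∫ ∑_{i,j} [(⟨∂_i w, ∂_j φ⟩ + ⟨∂_i φ, ∂_j w⟩)⟨∂_i v, ∂_j φ⟩ + ⟨∂_i φ, ∂_j φ⟩⟨∂_i v, ∂_j w⟩]`. -/
theorem symphonic_second_variation (m n : ℕ) (φ v w : (Fin m → ℝ) → Fin n → ℝ)
    (hφ : ContDiff ℝ (⊤ : ℕ∞) φ) (hv : ContDiff ℝ (⊤ : ℕ∞) v) (hw : ContDiff ℝ (⊤ : ℕ∞) w)
    (hvs : HasCompactSupport v) (hws : HasCompactSupport w) :
    HasDerivAt (fun s : ℝ => deriv (fun t : ℝ => ∫ x : Fin m → ℝ,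
          ((∑ i, ∑ j,
              inn (pd (fun y => φ y + t • v y + s • w y) i x)
                  (pd (fun y => φ y + t • v y + s • w y) j x) ^ 2)
            - ∑ i, ∑ j, inn (pd φ i x) (pd φ j x) ^ 2)) 0)
      (4 * ∫ x : Fin m → ℝ, ∑ i, ∑ j,
          ((inn (pd w i x) (pd φ j x) + inn (pd φ i x) (pd w j x)) * inn (pd v i x) (pd φ j x)
            + inn (pd φ i x) (pd φ j x) * inn (pd v i x) (pd w j x))) 0 := by
  have hI0 : Integrable (K0 φ v w) :=
    ((SA_integrable hφ hφ hv hφ (Or.inr (Or.inr (Or.inl hvs)))).const_mul 2).add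
      ((SA_integrable hφ hφ hφ hv (Or.inr (Or.inr (Or.inr hvs)))).const_mul 2)
  have hI1 : Integrable (K1 φ v w) :=
    ((SA_integrable hφ hφ hw hφ (Or.inr (Or.inr (Or.inl hws)))).const_mul 2).add
      ((SA_integrable hφ hφ hφ hw (Or.inr (Or.inr (Or.inr hws)))).const_mul 2)
  have hI2 : Integrable (K2 φ v w) :=
    ((((SA_integrable hφ hφ hv hv (Or.inr (Or.inr (Or.inl hvs)))).const_mul 2).add
      (SA_integrable hv hφ hv hφ (Or.inl hvs))).add
      ((SA_integrable hv hφ hφ hv (Or.inl hvs)).const_mul 2)).add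
      (SA_integrable hφ hv hφ hv (Or.inr (Or.inl hvs)))
  have hI3 : Integrable (K3 φ v w) :=
    ((((SA_integrable hφ hφ hw hw (Or.inr (Or.inr (Or.inl hws)))).const_mul 2).add
      (SA_integrable hw hφ hw hφ (Or.inl hws))).add
      ((SA_integrable hw hφ hφ hw (Or.inl hws)).const_mul 2)).add
      (SA_integrable hφ hw hφ hw (Or.inr (Or.inl hws)))
  have hI4 : Integrable (K4 φ v w) :=
    ((((((SA_integrable hφ hφ hw hv (Or.inr (Or.inr (Or.inl hws)))).const_mul 2).add
      ((SA_integrable hφ hφ hv hw (Or.inr (Or.inr (Or.inl hvs)))).const_mul 2)).add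
      ((SA_integrable hv hφ hw hφ (Or.inl hvs)).const_mul 2)).add
      ((SA_integrable hv hφ hφ hw (Or.inl hvs)).const_mul 2)).add
      ((SA_integrable hφ hv hw hφ (Or.inr (Or.inl hvs))).const_mul 2)).add
      ((SA_integrable hφ hv hφ hw (Or.inr (Or.inl hvs))).const_mul 2)
  have hI5 : Integrable (K5 φ v w) :=
    ((SA_integrable hv hφ hv hv (Or.inl hvs)).const_mul 2).add
      ((SA_integrable hφ hv hv hv (Or.inr (Or.inl hvs))).const_mul 2)
  have hI6 : Integrable (K6 φ v w) :=
    ((((((SA_integrable hv hφ hw hw (Or.inl hvs)).const_mul 2).add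
      ((SA_integrable hφ hv hw hw (Or.inr (Or.inl hvs))).const_mul 2)).add
      ((SA_integrable hw hφ hw hv (Or.inl hws)).const_mul 2)).add
      ((SA_integrable hw hφ hv hw (Or.inl hws)).const_mul 2)).add
      ((SA_integrable hφ hw hw hv (Or.inr (Or.inl hws))).const_mul 2)).add
      ((SA_integrable hφ hw hv hw (Or.inr (Or.inl hws))).const_mul 2)
  have hI7 : Integrable (K7 φ v w) :=
    ((((((SA_integrable hv hφ hw hv (Or.inl hvs)).const_mul 2).add
      ((SA_integrable hv hφ hv hw (Or.inl hvs)).const_mul 2)).add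
      ((SA_integrable hφ hv hw hv (Or.inr (Or.inl hvs))).const_mul 2)).add
      ((SA_integrable hφ hv hv hw (Or.inr (Or.inl hvs))).const_mul 2)).add
      ((SA_integrable hw hφ hv hv (Or.inl hws)).const_mul 2)).add
      ((SA_integrable hφ hw hv hv (Or.inr (Or.inl hws))).const_mul 2)
  have hI8 : Integrable (K8 φ v w) :=
    ((SA_integrable hw hφ hw hw (Or.inl hws)).const_mul 2).add
      ((SA_integrable hφ hw hw hw (Or.inr (Or.inl hws))).const_mul 2)
  have hI9 : Integrable (K9 φ v w) := SA_integrable hv hv hv hv (Or.inl hvs)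
  have hI10 : Integrable (K10 φ v w) :=
    ((((SA_integrable hv hv hw hw (Or.inl hvs)).const_mul 2).add
      (SA_integrable hw hv hw hv (Or.inl hws))).add
      ((SA_integrable hw hv hv hw (Or.inl hws)).const_mul 2)).add
      (SA_integrable hv hw hv hw (Or.inl hvs))
  have hI11 : Integrable (K11 φ v w) :=
    ((SA_integrable hv hv hw hv (Or.inl hvs)).const_mul 2).add
      ((SA_integrable hv hv hv hw (Or.inl hvs)).const_mul 2)
  have hI12 : Integrable (K12 φ v w) := SA_integrable hw hw hw hw (Or.inl hws)
  have hI13 : Integrable (K13 φ v w) :=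
    ((SA_integrable hw hw hw hv (Or.inl hws)).const_mul 2).add
      ((SA_integrable hw hw hv hw (Or.inl hws)).const_mul 2)
  have hG : ∀ s t : ℝ, (∫ x : Fin m → ℝ,
      ((∑ i, ∑ j,
          inn (pd (fun y => φ y + t • v y + s • w y) i x)
              (pd (fun y => φ y + t • v y + s • w y) j x) ^ 2)
        - ∑ i, ∑ j, inn (pd φ i x) (pd φ j x) ^ 2))
      = t * (∫ x, K0 φ v w x) + (s * (∫ x, K1 φ v w x) + (t ^ 2 * (∫ x, K2 φ v w x)
        + (s ^ 2 * (∫ x, K3 φ v w x) + (s * t * (∫ x, K4 φ v w x)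
        + (t ^ 3 * (∫ x, K5 φ v w x) + (s ^ 2 * t * (∫ x, K6 φ v w x)
        + (s * t ^ 2 * (∫ x, K7 φ v w x) + (s ^ 3 * (∫ x, K8 φ v w x)
        + (t ^ 4 * (∫ x, K9 φ v w x) + (s ^ 2 * t ^ 2 * (∫ x, K10 φ v w x)
        + (s * t ^ 3 * (∫ x, K11 φ v w x) + (s ^ 4 * (∫ x, K12 φ v w x)
        + s ^ 3 * t * (∫ x, K13 φ v w x))))))))))))) := by
    intro s t
    have B13 : Integrable (fun x : Fin m → ℝ => s ^ 4 * K12 φ v w x + s ^ 3 * t * K13 φ v w x) :=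
      (hI12.const_mul _).add (hI13.const_mul _)
    have B12 : Integrable (fun x : Fin m → ℝ => s * t ^ 3 * K11 φ v w x
        + (s ^ 4 * K12 φ v w x + s ^ 3 * t * K13 φ v w x)) := (hI11.const_mul _).add B13
    have B11 : Integrable (fun x : Fin m → ℝ => s ^ 2 * t ^ 2 * K10 φ v w x
        + (s * t ^ 3 * K11 φ v w x + (s ^ 4 * K12 φ v w x + s ^ 3 * t * K13 φ v w x))) :=
      (hI10.const_mul _).add B12
    have B10 : Integrable (fun x : Fin m → ℝ => t ^ 4 * K9 φ v w x
        + (s ^ 2 * t ^ 2 * K10 φ v w x + (s * t ^ 3 * K11 φ v w x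
        + (s ^ 4 * K12 φ v w x + s ^ 3 * t * K13 φ v w x)))) := (hI9.const_mul _).add B11
    have B9 : Integrable (fun x : Fin m → ℝ => s ^ 3 * K8 φ v w x + (t ^ 4 * K9 φ v w x
        + (s ^ 2 * t ^ 2 * K10 φ v w x + (s * t ^ 3 * K11 φ v w x
        + (s ^ 4 * K12 φ v w x + s ^ 3 * t * K13 φ v w x))))) := (hI8.const_mul _).add B10
    have B8 : Integrable (fun x : Fin m → ℝ => s * t ^ 2 * K7 φ v w x + (s ^ 3 * K8 φ v w x
        + (t ^ 4 * K9 φ v w x + (s ^ 2 * t ^ 2 * K10 φ v w x + (s * t ^ 3 * K11 φ v w x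
        + (s ^ 4 * K12 φ v w x + s ^ 3 * t * K13 φ v w x)))))) := (hI7.const_mul _).add B9
    have B7 : Integrable (fun x : Fin m → ℝ => s ^ 2 * t * K6 φ v w x
        + (s * t ^ 2 * K7 φ v w x + (s ^ 3 * K8 φ v w x + (t ^ 4 * K9 φ v w x
        + (s ^ 2 * t ^ 2 * K10 φ v w x + (s * t ^ 3 * K11 φ v w x
        + (s ^ 4 * K12 φ v w x + s ^ 3 * t * K13 φ v w x))))))) := (hI6.const_mul _).add B8
    have B6 : Integrable (fun x : Fin m → ℝ => t ^ 3 * K5 φ v w x + (s ^ 2 * t * K6 φ v w x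
        + (s * t ^ 2 * K7 φ v w x + (s ^ 3 * K8 φ v w x + (t ^ 4 * K9 φ v w x
        + (s ^ 2 * t ^ 2 * K10 φ v w x + (s * t ^ 3 * K11 φ v w x
        + (s ^ 4 * K12 φ v w x + s ^ 3 * t * K13 φ v w x)))))))) := (hI5.const_mul _).add B7
    have B5 : Integrable (fun x : Fin m → ℝ => s * t * K4 φ v w x + (t ^ 3 * K5 φ v w x
        + (s ^ 2 * t * K6 φ v w x + (s * t ^ 2 * K7 φ v w x + (s ^ 3 * K8 φ v w x
        + (t ^ 4 * K9 φ v w x + (s ^ 2 * t ^ 2 * K10 φ v w x + (s * t ^ 3 * K11 φ v w x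
        + (s ^ 4 * K12 φ v w x + s ^ 3 * t * K13 φ v w x))))))))) := (hI4.const_mul _).add B6
    have B4 : Integrable (fun x : Fin m → ℝ => s ^ 2 * K3 φ v w x + (s * t * K4 φ v w x
        + (t ^ 3 * K5 φ v w x + (s ^ 2 * t * K6 φ v w x + (s * t ^ 2 * K7 φ v w x
        + (s ^ 3 * K8 φ v w x + (t ^ 4 * K9 φ v w x + (s ^ 2 * t ^ 2 * K10 φ v w x
        + (s * t ^ 3 * K11 φ v w x + (s ^ 4 * K12 φ v w x
        + s ^ 3 * t * K13 φ v w x)))))))))) := (hI3.const_mul _).add B5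
    have B3 : Integrable (fun x : Fin m → ℝ => t ^ 2 * K2 φ v w x + (s ^ 2 * K3 φ v w x
        + (s * t * K4 φ v w x + (t ^ 3 * K5 φ v w x + (s ^ 2 * t * K6 φ v w x
        + (s * t ^ 2 * K7 φ v w x + (s ^ 3 * K8 φ v w x + (t ^ 4 * K9 φ v w x
        + (s ^ 2 * t ^ 2 * K10 φ v w x + (s * t ^ 3 * K11 φ v w x
        + (s ^ 4 * K12 φ v w x + s ^ 3 * t * K13 φ v w x))))))))))) := (hI2.const_mul _).add B4
    have B2 : Integrable (fun x : Fin m → ℝ => s * K1 φ v w x + (t ^ 2 * K2 φ v w x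
        + (s ^ 2 * K3 φ v w x + (s * t * K4 φ v w x + (t ^ 3 * K5 φ v w x
        + (s ^ 2 * t * K6 φ v w x + (s * t ^ 2 * K7 φ v w x + (s ^ 3 * K8 φ v w x
        + (t ^ 4 * K9 φ v w x + (s ^ 2 * t ^ 2 * K10 φ v w x + (s * t ^ 3 * K11 φ v w x
        + (s ^ 4 * K12 φ v w x + s ^ 3 * t * K13 φ v w x)))))))))))) := (hI1.const_mul _).add B3
    simp only [hpt_expand φ v w hφ hv hw]
    rw [integral_add (hI0.const_mul t) B2, integral_add (hI1.const_mul s) B3,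
      integral_add (hI2.const_mul _) B4, integral_add (hI3.const_mul _) B5,
      integral_add (hI4.const_mul _) B6, integral_add (hI5.const_mul _) B7,
      integral_add (hI6.const_mul _) B8, integral_add (hI7.const_mul _) B9,
      integral_add (hI8.const_mul _) B10, integral_add (hI9.const_mul _) B11,
      integral_add (hI10.const_mul _) B12, integral_add (hI11.const_mul _) B13,
      integral_add (hI12.const_mul _) (hI13.const_mul _)]
    simp only [integral_const_mul]
  have hderiv_t : ∀ s : ℝ, deriv (fun t : ℝ => ∫ x : Fin m → ℝ,
      ((∑ i, ∑ j,
          inn (pd (fun y => φ y + t • v y + s • w y) i x)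
              (pd (fun y => φ y + t • v y + s • w y) j x) ^ 2)
        - ∑ i, ∑ j, inn (pd φ i x) (pd φ j x) ^ 2)) 0
      = (∫ x, K0 φ v w x) + s * (∫ x, K4 φ v w x) + s ^ 2 * (∫ x, K6 φ v w x)
        + s ^ 3 * (∫ x, K13 φ v w x) := by
    intro s
    rw [show (fun t : ℝ => ∫ x : Fin m → ℝ,
        ((∑ i, ∑ j,
            inn (pd (fun y => φ y + t • v y + s • w y) i x)
                (pd (fun y => φ y + t • v y + s • w y) j x) ^ 2)
          - ∑ i, ∑ j, inn (pd φ i x) (pd φ j x) ^ 2))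
      = fun t : ℝ => (s * (∫ x, K1 φ v w x) + s ^ 2 * (∫ x, K3 φ v w x)
          + s ^ 3 * (∫ x, K8 φ v w x) + s ^ 4 * (∫ x, K12 φ v w x))
        + ((∫ x, K0 φ v w x) + s * (∫ x, K4 φ v w x) + s ^ 2 * (∫ x, K6 φ v w x)
          + s ^ 3 * (∫ x, K13 φ v w x)) * t
        + ((∫ x, K2 φ v w x) + s * (∫ x, K7 φ v w x) + s ^ 2 * (∫ x, K10 φ v w x)) * t ^ 2
        + ((∫ x, K5 φ v w x) + s * (∫ x, K11 φ v w x)) * t ^ 3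
        + (∫ x, K9 φ v w x) * t ^ 4
      from funext fun t => by rw [hG s t]; ring]
    rw [(hasDerivAt_quartic _ _ _ _ _).deriv]
  have hfun : (fun s : ℝ => deriv (fun t : ℝ => ∫ x : Fin m → ℝ,
        ((∑ i, ∑ j,
            inn (pd (fun y => φ y + t • v y + s • w y) i x)
                (pd (fun y => φ y + t • v y + s • w y) j x) ^ 2)
          - ∑ i, ∑ j, inn (pd φ i x) (pd φ j x) ^ 2)) 0)
      = fun s : ℝ => (∫ x, K0 φ v w x) + (∫ x, K4 φ v w x) * s + (∫ x, K6 φ v w x) * s ^ 2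
        + (∫ x, K13 φ v w x) * s ^ 3 + 0 * s ^ 4 :=
    funext fun s => by rw [hderiv_t s]; ring
  rw [hfun]
  have hpt4 : ∀ x : Fin m → ℝ, K4 φ v w x = 4 * ∑ i, ∑ j,
      ((inn (pd w i x) (pd φ j x) + inn (pd φ i x) (pd w j x)) * inn (pd v i x) (pd φ j x)
        + inn (pd φ i x) (pd φ j x) * inn (pd v i x) (pd w j x)) := by
    intro x
    have t1 : (∑ i, ∑ j,
        ((inn (pd w i x) (pd φ j x) + inn (pd φ i x) (pd w j x)) * inn (pd v i x) (pd φ j x)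
          + inn (pd φ i x) (pd φ j x) * inn (pd v i x) (pd w j x)))
        = SA w φ v φ x + (SA φ w v φ x + SA φ φ v w x) := by
      simp only [SA, ← Finset.sum_add_distrib]
      exact Finset.sum_congr rfl fun i _ => Finset.sum_congr rfl fun j _ => by ring
    rw [t1, SA_comm w φ v φ x, SA_comm φ w v φ x]
    simp only [K4]
    rw [SA_swap φ φ w v x, SA_swap φ v w φ x, SA_swap φ v φ w x]
    ring
  have h4 : (∫ x : Fin m → ℝ, K4 φ v w x) = 4 * ∫ x : Fin m → ℝ, ∑ i, ∑ j,
      ((inn (pd w i x) (pd φ j x) + inn (pd φ i x) (pd w j x)) * inn (pd v i x) (pd φ j x)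
        + inn (pd φ i x) (pd φ j x) * inn (pd v i x) (pd w j x)) := by
    simp only [hpt4]
    exact integral_const_mul 4 _
  rw [← h4]
  exact hasDerivAt_quartic _ _ _ _ _
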